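/- Let X be an affine variety over k with coordinate ring A. For each affine embedding ι : X ↪ A^m (given by generators f_1, ..., f_m of A) define the extended tropicalization Trop(X, ι) ⊆ R̄^m as the union over subsets I_0 ⊆ {1, ..., m} of the sets trop(X ∩ T^{I_0}), where X ∩ T^{I_0} is the closed subvariety of the torus T^{I_0} whose ideal consists of all Laurent polynomials in the variables x_i, i ∈ I_0, vanishing at every point of {y ∈ X(k) : y_i ≠ 0 if and only if i ∈ I_0}, trop is defined by the initial-form criterion with the trivial valuation (v lies in trop if for every nonzero f in the ideal the minimum of ⟨u, v⟩ over supp(f) is attained at least twice), and trop(X ∩ T^{I_0}) is embedded in the stratum ℝ^{I_0} = {v ∈ R̄^m : v_i < ∞ iff i ∈ I_0}; let π_ι : X^an → R̄^m be x ↦ (−log|f_1|_x, ..., −log|f_m|_x), with −log 0 = ∞. Then the induced map varprojlim π_ι is a homeomorphism from X^an onto varprojlim Trop(X, ι), the inverse limit of topological spaces taken over all affine embeddings ι with transition maps Trop(φ) for all equivariant morphisms φ between the ambient affine spaces that commute with the embeddings. -/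

import Mathlib

open scoped BigOperators Classical

noncomputable section

/-- The extended real line `R̄ = ℝ ∪ {∞}`. -/
abbrev Rbar : Type := WithTop ℝ

/-- The map `a ↦ exp (−a)`, sending `∞` to `0`. -/
def expNeg (t : Rbar) : ℝ := if h : t = ⊤ then 0 else Real.exp (-(t.untop h))

/-- The topology on `R̄` in which `ℝ` carries its usual topology and the completed rays
`(a, ∞]` are a basis of neighborhoods of `∞`; equivalently, the topology induced by the
injection `expNeg : R̄ → ℝ`, which is a homeomorphism onto `[0, ∞)`. -/
instance : TopologicalSpace Rbar := TopologicalSpace.induced expNeg inferInstance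

/-- `−log r`, with `−log 0 = ∞`. -/
def negLog (r : ℝ) : Rbar := if r = 0 then ⊤ else (((-Real.log r : ℝ)) : Rbar)

/-- `ν : K → ℝ ∪ {∞}` is a (nonarchimedean) valuation: `ν(0) = ∞`,
`ν(ab) = ν(a) + ν(b)`, and `ν(a + b) ≥ min (ν a) (ν b)`. -/
structure IsVal {K : Type} [Field K] (ν : K → Rbar) : Prop where
  map_zero : ν 0 = ⊤
  map_mul : ∀ a b : K, ν (a * b) = ν a + ν b
  min_le_add : ∀ a b : K, min (ν a) (ν b) ≤ ν (a + b)

/-- The valuation `ν` is nontrivial: `ν(K*) ≠ {0}`. -/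
def IsNontrivialVal {K : Type} [Field K] (ν : K → Rbar) : Prop :=
  ∃ a : K, a ≠ 0 ∧ ν a ≠ 0

/-- The trivial valuation on a field `k`: `ν(a) = 0` for `a ≠ 0` and `ν(0) = ∞`. -/
def nuTriv (k : Type) [Field k] : k → Rbar := fun a => if a = 0 then ⊤ else 0

/-- `K` is complete with respect to the valuation `ν`, i.e. with respect to the induced
nonarchimedean absolute value `expNeg ∘ ν`: every Cauchy sequence converges. -/
def VComplete {K : Type} [Field K] (ν : K → Rbar) : Prop :=
  ∀ s : ℕ → K,
    (∀ ε : ℝ, 0 < ε → ∃ N : ℕ, ∀ p ≥ N, ∀ q ≥ N, expNeg (ν (s p - s q)) < ε) →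
    ∃ L : K, ∀ ε : ℝ, 0 < ε → ∃ N : ℕ, ∀ p ≥ N, expNeg (ν (s p - L)) < ε

/-- A multiplicative seminorm on a commutative ring `A`: a nonnegative real-valued
function with `|0| = 0`, `|1| = 1`, `|fg| = |f|·|g|` and `|f + g| ≤ |f| + |g|`. -/
structure IsMultSeminorm {A : Type} [CommRing A] (p : A → ℝ) : Prop where
  nonneg : ∀ f, 0 ≤ p f
  map_zero : p 0 = 0
  map_one : p 1 = 1
  map_mul : ∀ f g, p (f * g) = p f * p g
  add_le : ∀ f g, p (f + g) ≤ p f + p g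

/-- A seminorm on the `K`-algebra `A` is compatible with `ν` if `|a| = exp(−ν(a))` for
every scalar `a ∈ K`. -/
def Compat {K A : Type} [Field K] [CommRing A] [Algebra K A] (ν : K → Rbar) (p : A → ℝ) :
    Prop :=
  ∀ a : K, p (algebraMap K A a) = expNeg (ν a)

/-- The analytification `X^an` of the affine variety `X = Spec A` over the complete
nonarchimedean field `(K, ν)`: the set of multiplicative seminorms on `A` compatible with
`ν`, topologized (as a subset of `A → ℝ` with the product topology) by the coarsest
topology making `x ↦ |f|_x` continuous for every `f ∈ A`. -/
def Xan (K A : Type) [Field K] [CommRing A] [Algebra K A] (ν : K → Rbar) : Set (A → ℝ) :=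
  {p | IsMultSeminorm p ∧ Compat ν p}

/-- The analytification `X^an` over a trivially valued field `k`: the set of
multiplicative seminorms on `A` that are equal to `1` on `k*`, with the topology of
pointwise convergence. -/
def XanTriv (k A : Type) [Field k] [CommRing A] [Algebra k A] : Set (A → ℝ) :=
  {p | IsMultSeminorm p ∧ ∀ a : k, a ≠ 0 → p (algebraMap k A a) = 1}

/-- The projection `π_ι : X^an → R̄^m` attached to the affine embedding `ι` given by the
generators `f 0, ..., f (m-1)` of `A`: `x ↦ (−log|f 0|_x, ..., −log|f (m-1)|_x)`. -/
def piIota {K A : Type} [Field K] [CommRing A] [Algebra K A] (ν : K → Rbar) {m : ℕ}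
    (f : Fin m → A) (x : ↥(Xan K A ν)) : Fin m → Rbar :=
  fun i => negLog (x.1 (f i))

/-- The projection `π_ι : X^an → R̄^m` for a trivially valued base field. -/
def piIotaTriv {k A : Type} [Field k] [CommRing A] [Algebra k A] {m : ℕ}
    (f : Fin m → A) (x : ↥(XanTriv k A)) : Fin m → Rbar :=
  fun i => negLog (x.1 (f i))

/-- The tropicalization `Trop(X, ι)` of the affine embedding `ι : X ↪ A^m` of
`X = Spec A` given by the generators `f` of `A`: the closure in `R̄^m` of the set of
coordinatewise valuations of the `K`-points of `X`. -/
def TropX {K A : Type} [Field K] [CommRing A] [Algebra K A] (ν : K → Rbar) {m : ℕ}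
    (f : Fin m → A) : Set (Fin m → Rbar) :=
  closure {v | ∃ φ : A →ₐ[K] K, v = fun i => ν (φ (f i))}

/-- The tropicalization `Trop(φ) : R̄^m → R̄^n` of the equivariant morphism
`φ : A^m → A^n` whose coordinates are `y_j ↦ c_j · x^{a_j}`, namely
`v ↦ (ν(c_1) + ⟨a_1, v⟩, ..., ν(c_n) + ⟨a_n, v⟩)`, with the conventions `ν(0) = ∞`,
`∞ + t = ∞`, `a_i · ∞ = ∞` for `a_i > 0`, and `0 · ∞ = 0`. -/
def tropMap {K : Type} [Field K] (ν : K → Rbar) {m n : ℕ} (c : Fin n → K)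
    (a : Fin n → Fin m → ℕ) (v : Fin m → Rbar) : Fin n → Rbar :=
  fun j => ν (c j) + ∑ i, (a j i) • v i

/-- The affine embeddings of `X = Spec A`: an embedding `ι : X ↪ A^m` is a tuple of
generators of `A` as a `K`-algebra. -/
def AffEmb (K A : Type) [Field K] [CommRing A] [Algebra K A] : Type :=
  Σ m : ℕ, {f : Fin m → A // Algebra.adjoin K (Set.range f) = ⊤}

/-- The map `X^an → Π_ι R̄^{m(ι)}`, `x ↦ (π_ι(x))_ι`, over all affine embeddings `ι`. -/
def bigMap (K A : Type) [Field K] [CommRing A] [Algebra K A] (ν : K → Rbar)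
    (x : ↥(Xan K A ν)) : ∀ e : AffEmb K A, Fin e.1 → Rbar :=
  fun e => piIota ν e.2.1 x

/-- The inverse limit `varprojlim Trop(X, ι)`, realized inside `Π_ι R̄^{m(ι)}`: families
`(y_ι)` with `y_ι ∈ Trop(X, ι)` for all `ι` and `y_ȷ = Trop(φ)(y_ι)` for every
equivariant morphism `φ : A^{m(ι)} → A^{m(ȷ)}` with `ȷ = φ ∘ ι`. -/
def limitSet (K A : Type) [Field K] [CommRing A] [Algebra K A] (ν : K → Rbar) :
    Set (∀ e : AffEmb K A, Fin e.1 → Rbar) :=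
  {y | (∀ e : AffEmb K A, y e ∈ TropX ν e.2.1) ∧
    ∀ (e e' : AffEmb K A) (c : Fin e'.1 → K) (a : Fin e'.1 → Fin e.1 → ℕ),
      (∀ j, e'.2.1 j = algebraMap K A (c j) * ∏ i, (e.2.1 i) ^ (a j i)) →
      y e' = tropMap ν c a (y e)}

/-- The ring of Laurent polynomials `K[x_1^{±1}, ..., x_m^{±1}]`, i.e. the group algebra
of `ℤ^m` over `K`. -/
abbrev Laur (K : Type) [Field K] (m : ℕ) : Type := AddMonoidAlgebra K (Fin m → ℤ)

/-- Evaluation of a Laurent polynomial at a point `y ∈ K^m` (meaningful when the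
relevant coordinates of `y` are invertible). -/
def lEval {K : Type} [Field K] {m : ℕ} (y : Fin m → K) (g : Laur K m) : K :=
  ∑ u ∈ g.coeff.support, g.coeff u * ∏ i, (y i) ^ (u i)

/-- The tropical minimum of the Laurent polynomial `f` at `v ∈ ℝ^m` is attained twice:
the minimum of `ν(a_u) + ⟨u, v⟩` over `u ∈ supp(f)` is achieved by at least two distinct
`u ∈ supp(f)`.  (Equivalently, the initial form of `f` at `v` is not a monomial.) -/
def MinTwice {K : Type} [Field K] {m : ℕ} (ν : K → Rbar) (f : Laur K m) (v : Fin m → ℝ) :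
    Prop :=
  ∃ u ∈ f.coeff.support, ∃ u' ∈ f.coeff.support, u ≠ u' ∧
    ν (f.coeff u) + ((∑ i, (u i : ℝ) * v i : ℝ) : Rbar)
      = ν (f.coeff u') + ((∑ i, (u' i : ℝ) * v i : ℝ) : Rbar) ∧
    ∀ w ∈ f.coeff.support,
      ν (f.coeff u) + ((∑ i, (u i : ℝ) * v i : ℝ) : Rbar)
        ≤ ν (f.coeff w) + ((∑ i, (w i : ℝ) * v i : ℝ) : Rbar)

/-- With the trivial valuation: the minimum of `⟨u, w⟩` over `supp g` is attained by at
least two distinct `u ∈ supp g`. -/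
def MinTwiceTriv {k : Type} [Field k] {m : ℕ} (g : Laur k m) (w : Fin m → ℝ) : Prop :=
  ∃ u ∈ g.coeff.support, ∃ u' ∈ g.coeff.support, u ≠ u' ∧
    (∑ i, (u i : ℝ) * w i) = (∑ i, (u' i : ℝ) * w i) ∧
    ∀ z ∈ g.coeff.support, (∑ i, (u i : ℝ) * w i) ≤ ∑ i, (z i : ℝ) * w i

/-- The tropicalization `T_trop(J)` of an ideal of Laurent polynomials: the set of
`v ∈ ℝ^m` such that for every nonzero `f ∈ J` the tropical minimum of `f` at `v` is
attained twice. -/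
def Ttrop {K : Type} [Field K] {m : ℕ} (ν : K → Rbar) (J : Ideal (Laur K m)) :
    Set (Fin m → ℝ) :=
  {v | ∀ f ∈ J, f ≠ 0 → MinTwice ν f v}

/-- The `K`-points of the closed subvariety of the torus `T^m` cut out by the ideal `I`:
points of `(K*)^m` at which every element of `I` vanishes. -/
def torusPoints {K : Type} [Field K] {m : ℕ} (I : Ideal (Laur K m)) :
    Set (Fin m → Kˣ) :=
  {y | ∀ f ∈ I, lEval (fun i => (y i : K)) f = 0}

/-- The real number `ν(a)` (with junk value `0` when `ν(a) = ∞`, i.e. when `a = 0`). -/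
def vR {K : Type} [Field K] (ν : K → Rbar) (a : K) : ℝ := (ν a).untopD 0

/-- The set `{trop(y) : y ∈ X(K)} ⊆ ℝ^m` of coordinatewise valuations of the `K`-points
of the closed subvariety of the torus cut out by `I`; `trop(X)` is its closure. -/
def tropImg {K : Type} [Field K] {m : ℕ} (ν : K → Rbar) (I : Ideal (Laur K m)) :
    Set (Fin m → ℝ) :=
  {w | ∃ y ∈ torusPoints I, w = fun i => vR ν ((y i : Kˣ) : K)}

/-- The `K`-points of the closed subvariety of `A^m` cut out by the ideal `J`. -/
def affPoints {K : Type} [Field K] {m : ℕ} (J : Ideal (MvPolynomial (Fin m) K)) :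
    Set (Fin m → K) :=
  {y | ∀ f ∈ J, MvPolynomial.eval y f = 0}

/-- The extended tropicalization in `R̄^m` of a set of points of `A^m(K)`: the closure of
the set of coordinatewise valuations. -/
def TropAff {K : Type} [Field K] {m : ℕ} (ν : K → Rbar) (S : Set (Fin m → K)) :
    Set (Fin m → Rbar) :=
  closure {v | ∃ y ∈ S, v = fun i => ν (y i)}

/-- The coefficientwise extension map
`k[x_1^{±1}, ..., x_m^{±1}] → K[x_1^{±1}, ..., x_m^{±1}]` along `algebraMap k K`. -/
def laurExt (k K : Type) [Field k] [Field K] [Algebra k K] (m : ℕ) :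
    Laur k m →ₐ[k] Laur K m :=
  (AddMonoidAlgebra.lift (R := k) (M := Fin m → ℤ) (A := Laur K m)) (AddMonoidAlgebra.of K (Fin m → ℤ))

/-- The `i`-th coordinate function `x_i` in the coordinate ring
`k[X] = k[x_1^{±1}, ..., x_m^{±1}] / I` of a closed subvariety of the torus. -/
def coordLaur {k : Type} [Field k] {m : ℕ} (I : Ideal (Laur k m)) (i : Fin m) :
    Laur k m ⧸ I :=
  Ideal.Quotient.mk I (AddMonoidAlgebra.single (Pi.single i (1 : ℤ)) (1 : k))

/-- The projection `π : X^an → ℝ^m`, `x ↦ (−log|x_1|_x, ..., −log|x_m|_x)`, for a closed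
subvariety of the torus over a trivially valued field. -/
def piTorus {k : Type} [Field k] {m : ℕ} (I : Ideal (Laur k m))
    (x : ↥(XanTriv k (Laur k m ⧸ I))) : Fin m → ℝ :=
  fun i => -Real.log (x.1 (coordLaur I i))

/-- `trop(X)` for a closed subvariety of the torus over a trivially valued field: the
set of `v ∈ ℝ^m` such that for every nonzero `f ∈ I` the minimum of `⟨u, v⟩` over
`supp f` is attained at least twice. -/
def tropTrivTorus {k : Type} [Field k] {m : ℕ} (I : Ideal (Laur k m)) :
    Set (Fin m → ℝ) :=
  {v | ∀ f ∈ I, f ≠ 0 → MinTwiceTriv f v}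

/-- The vanishing ideal of `X ∩ T^{I₀}` for the affine embedding of `X = Spec A` given
by generators `f`: Laurent polynomials in the variables `x_i`, `i ∈ I₀` (support
condition), vanishing at every `k`-point `y` of `X` with `y_i ≠ 0` iff `i ∈ I₀`. -/
def stratVanishing (k A : Type) [Field k] [CommRing A] [Algebra k A] {m : ℕ}
    (f : Fin m → A) (I0 : Finset (Fin m)) : Set (Laur k m) :=
  {g | (∀ u ∈ g.coeff.support, ∀ i, i ∉ I0 → u i = 0) ∧
    ∀ φ : A →ₐ[k] k, (∀ i, φ (f i) ≠ 0 ↔ i ∈ I0) → lEval (fun i => φ (f i)) g = 0}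

/-- The extended tropicalization `Trop(X, ι) ⊆ R̄^m` over a trivially valued field: the
union over `I₀ ⊆ {1, ..., m}` of the sets `trop(X ∩ T^{I₀})`, each embedded in the
stratum `ℝ^{I₀} = {v : v_i < ∞ iff i ∈ I₀}` (coordinates `∞` off `I₀`). -/
def TropStrat (k A : Type) [Field k] [CommRing A] [Algebra k A] {m : ℕ}
    (f : Fin m → A) : Set (Fin m → Rbar) :=
  {v | ∃ (I0 : Finset (Fin m)) (w : Fin m → ℝ),
        (v = fun i => if i ∈ I0 then ((w i : ℝ) : Rbar) else ⊤) ∧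
        ∀ g ∈ stratVanishing k A f I0, g ≠ 0 → MinTwiceTriv g w}

/-- The map `X^an → Π_ι R̄^{m(ι)}` over a trivially valued field. -/
def bigMapTriv (k A : Type) [Field k] [CommRing A] [Algebra k A]
    (x : ↥(XanTriv k A)) : ∀ e : AffEmb k A, Fin e.1 → Rbar :=
  fun e => piIotaTriv e.2.1 x

/-- The inverse limit `varprojlim Trop(X, ι)` over a trivially valued field, realized
inside `Π_ι R̄^{m(ι)}`. -/
def limitSetTriv (k A : Type) [Field k] [CommRing A] [Algebra k A] :
    Set (∀ e : AffEmb k A, Fin e.1 → Rbar) :=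
  {y | (∀ e : AffEmb k A, y e ∈ TropStrat k A e.2.1) ∧
    ∀ (e e' : AffEmb k A) (c : Fin e'.1 → k) (a : Fin e'.1 → Fin e.1 → ℕ),
      (∀ j, e'.2.1 j = algebraMap k A (c j) * ∏ i, (e.2.1 i) ^ (a j i)) →
      y e' = tropMap (nuTriv k) c a (y e)}





open scoped BigOperators Classical

noncomputable section

@[simp] lemma expNeg_top : expNeg ⊤ = 0 := by simp [expNeg]

@[simp] lemma expNeg_coe (r : ℝ) : expNeg (r : Rbar) = Real.exp (-r) := by
  have h : ((r : Rbar)) ≠ ⊤ := WithTop.coe_ne_top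
  simp [expNeg, h]

lemma expNeg_nonneg (t : Rbar) : 0 ≤ expNeg t := by
  induction t using WithTop.recTopCoe with
  | top => simp
  | coe r => simp [Real.exp_nonneg, le_of_lt (Real.exp_pos _)]

lemma expNeg_pos {t : Rbar} (h : t ≠ ⊤) : 0 < expNeg t := by
  induction t using WithTop.recTopCoe with
  | top => exact absurd rfl h
  | coe r => simp [Real.exp_pos]

lemma expNeg_eq_zero_iff {t : Rbar} : expNeg t = 0 ↔ t = ⊤ := by
  constructor
  · intro h; by_contra ht; exact (expNeg_pos ht).ne' h
  · rintro rfl; simp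

@[simp] lemma expNeg_zero : expNeg (0 : Rbar) = 1 := by
  have : ((0:ℝ) : Rbar) = (0 : Rbar) := rfl
  rw [← this, expNeg_coe]; simp

lemma expNeg_add (s t : Rbar) : expNeg (s + t) = expNeg s * expNeg t := by
  induction s using WithTop.recTopCoe with
  | top => simp
  | coe a =>
    induction t using WithTop.recTopCoe with
    | top => simp
    | coe b =>
      rw [← WithTop.coe_add, expNeg_coe, expNeg_coe, expNeg_coe, neg_add, Real.exp_add]

lemma expNeg_nsmul (n : ℕ) (t : Rbar) : expNeg (n • t) = expNeg t ^ n := by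
  induction n with
  | zero => simp
  | succ n ih => rw [succ_nsmul, expNeg_add, ih, pow_succ]

lemma expNeg_sum {ι : Type*} (s : Finset ι) (f : ι → Rbar) :
    expNeg (∑ i ∈ s, f i) = ∏ i ∈ s, expNeg (f i) := by
  classical
  induction s using Finset.induction_on with
  | empty => simp
  | insert _ _ hni ih => rename_i a s; rw [Finset.sum_insert hni, expNeg_add, ih, Finset.prod_insert hni]

lemma negLog_expNeg (t : Rbar) : negLog (expNeg t) = t := by
  induction t using WithTop.recTopCoe with
  | top => simp [negLog]
  | coe r =>
    rw [expNeg_coe, negLog, if_neg (Real.exp_ne_zero _), Real.log_exp]; simp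

lemma expNeg_negLog {r : ℝ} (h : 0 ≤ r) : expNeg (negLog r) = r := by
  rcases eq_or_lt_of_le h with h0 | h0
  · simp [negLog, ← h0]
  · rw [negLog, if_neg h0.ne', expNeg_coe, neg_neg, Real.exp_log h0]

lemma expNeg_injective : Function.Injective expNeg := by
  intro s t h
  rw [← negLog_expNeg s, ← negLog_expNeg t, h]

lemma expNeg_le_one_iff {t : Rbar} : expNeg t ≤ 1 ↔ 0 ≤ t := by
  induction t using WithTop.recTopCoe with
  | top => simp [le_top]
  | coe r =>
    rw [expNeg_coe, Real.exp_le_one_iff]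
    simp [WithTop.coe_nonneg, neg_nonpos]

@[simp] lemma nuTriv_zero {k : Type} [Field k] : nuTriv k 0 = ⊤ := by simp [nuTriv]

lemma nuTriv_ne_zero {k : Type} [Field k] {a : k} (h : a ≠ 0) : nuTriv k a = 0 := by
  simp [nuTriv, h]

end


open scoped BigOperators Classical

noncomputable section

variable {k A : Type} [Field k] [CommRing A] [Algebra k A]

lemma IsMultSeminorm.pow {p : A → ℝ} (hp : IsMultSeminorm p) (f : A) (n : ℕ) :
    p (f ^ n) = p f ^ n := by
  induction n with
  | zero => simpa using hp.map_one
  | succ n ih => rw [pow_succ, hp.map_mul, ih, pow_succ]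

lemma IsMultSeminorm.sum_le {p : A → ℝ} (hp : IsMultSeminorm p) {ι : Type*} (s : Finset ι)
    (F : ι → A) : p (∑ i ∈ s, F i) ≤ ∑ i ∈ s, p (F i) := by
  classical
  induction s using Finset.induction_on with
  | empty => simp [hp.map_zero]
  | insert _ _ hni ih =>
    rename_i a s
    rw [Finset.sum_insert hni, Finset.sum_insert hni]
    exact le_trans (hp.add_le _ _) (by linarith)

lemma xanTriv_algebraMap {x : A → ℝ} (hx : x ∈ XanTriv k A) (a : k) :
    x (algebraMap k A a) = expNeg (nuTriv k a) := by
  rcases eq_or_ne a 0 with rfl | h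
  · simp [map_zero, hx.1.map_zero]
  · rw [hx.2 a h, nuTriv_ne_zero h, expNeg_zero]

lemma xanTriv_natCast_le_one {x : A → ℝ} (hx : x ∈ XanTriv k A) (n : ℕ) :
    x ((n : A)) ≤ 1 := by
  have h : ((n : A)) = algebraMap k A ((n : k)) := by
    rw [map_natCast]
  rw [h, xanTriv_algebraMap hx]
  exact expNeg_le_one_iff.2 (by
    rcases eq_or_ne ((n:k)) 0 with h0 | h0
    · simp [nuTriv, h0, le_top]
    · simp [nuTriv_ne_zero h0])

/-- key: `c^n ≤ (n+1) M^n` for all `n` forces `c ≤ M`. -/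
lemma le_of_pow_le_succ_mul_pow {c M : ℝ} (hc : 0 ≤ c) (hM : 0 ≤ M)
    (h : ∀ n : ℕ, c ^ n ≤ (n + 1) * M ^ n) : c ≤ M := by
  by_contra hlt
  push_neg at hlt
  rcases eq_or_lt_of_le hM with h0 | h0
  · have h1 := h 1
    rw [← h0] at h1
    simp at h1
    nlinarith
  · set r := c / M with hr
    have hr1 : 1 < r := (one_lt_div h0).2 hlt
    have hrn : ∀ n : ℕ, r ^ n ≤ (n + 1 : ℝ) := by
      intro n
      have := h n
      rw [hr, div_pow, div_le_iff₀ (by positivity)]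
      linarith [h n]
    set d := r - 1 with hd
    have hd0 : 0 < d := by linarith
    obtain ⟨n, hn⟩ := exists_nat_gt (2 / d ^ 2)
    have hnd : 2 < (n : ℝ) * d ^ 2 := by
      rw [div_lt_iff₀ (by positivity)] at hn
      linarith
    have h1 : (1 : ℝ) + n * d ≤ r ^ n := by
      have := one_add_mul_le_pow (a := d) (by linarith) n
      simpa [hd] using this
    have h2 : ((1 : ℝ) + n * d) ^ 2 ≤ (r ^ n) ^ 2 := by
      have hpos : (0:ℝ) ≤ 1 + n * d := by positivity
      nlinarith
    have h3 : (r ^ n) ^ 2 = r ^ (2 * n) := by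
      rw [← pow_mul, mul_comm]
    have h4 := hrn (2 * n)
    push_cast at h4
    nlinarith [h2, h3 ▸ h2]
  
lemma xanTriv_nonarch {x : A → ℝ} (hx : x ∈ XanTriv k A) (f g : A) :
    x (f + g) ≤ max (x (f)) (x (g)) := by
  set M := max (x f) (x g) with hM
  have hM0 : 0 ≤ M := le_trans (hx.1.nonneg f) (le_max_left _ _)
  refine le_of_pow_le_succ_mul_pow (hx.1.nonneg _) hM0 (fun n => ?_)
  have hexp : (f + g) ^ n = ∑ i ∈ Finset.range (n + 1), f ^ i * g ^ (n - i) * ((n.choose i : A)) :=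
    add_pow f g n
  have hterm : ∀ i ∈ Finset.range (n + 1),
      x (f ^ i * g ^ (n - i) * ((n.choose i : A))) ≤ M ^ n := by
    intro i hi
    rw [Finset.mem_range] at hi
    have hi' : i ≤ n := Nat.lt_succ_iff.1 hi
    rw [hx.1.map_mul, hx.1.map_mul, hx.1.pow, hx.1.pow]
    have h1 : x f ^ i ≤ M ^ i := pow_le_pow_left₀ (hx.1.nonneg f) (le_max_left _ _) i
    have h2 : x g ^ (n - i) ≤ M ^ (n - i) := pow_le_pow_left₀ (hx.1.nonneg g) (le_max_right _ _) _
    have h3 : x ((n.choose i : A)) ≤ 1 := xanTriv_natCast_le_one hx _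
    have h4 : x f ^ i * x g ^ (n-i) * x ((n.choose i : A)) ≤ M ^ i * M ^ (n-i) * 1 := by
      have hg0 : (0:ℝ) ≤ x g ^ (n-i) := pow_nonneg (hx.1.nonneg g) _
      have := mul_le_mul h1 h2 hg0 (by positivity)
      have h5 : (0:ℝ) ≤ M ^ i * M ^ (n-i) := by positivity
      exact mul_le_mul this h3 (hx.1.nonneg _) h5
    rw [mul_one, ← pow_add, Nat.add_sub_cancel' hi'] at h4
    exact h4
  calc x (f + g) ^ n = x ((f + g) ^ n) := (hx.1.pow _ n).symm
    _ = x (∑ i ∈ Finset.range (n + 1), f ^ i * g ^ (n - i) * ((n.choose i : A))) := by rw [hexp]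
    _ ≤ ∑ i ∈ Finset.range (n + 1), x (f ^ i * g ^ (n - i) * ((n.choose i : A))) :=
        hx.1.sum_le _ _
    _ ≤ ∑ _i ∈ Finset.range (n + 1), M ^ n := Finset.sum_le_sum hterm
    _ = (n + 1) * M ^ n := by rw [Finset.sum_const, Finset.card_range]; push_cast; ring

lemma xanTriv_neg {x : A → ℝ} (hx : x ∈ XanTriv k A) (f : A) : x (-f) = x f := by
  have h1 : x (-1 : A) = 1 := by
    have h2 : x ((-1 : A)) ^ 2 = 1 := by
      rw [← hx.1.pow, neg_one_sq, hx.1.map_one]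
    have := hx.1.nonneg (-1 : A)
    nlinarith
  calc x (-f) = x ((-1) * f) := by ring_nf
    _ = x (-1) * x f := hx.1.map_mul _ _
    _ = x f := by rw [h1, one_mul]

/-- Ultrametric "isosceles" principle. -/
lemma xanTriv_add_eq_of_lt {x : A → ℝ} (hx : x ∈ XanTriv k A) {f g : A}
    (h : x g < x f) : x (f + g) = x f := by
  have h1 : x (f + g) ≤ max (x f) (x g) := xanTriv_nonarch hx f g
  have h2 : x f ≤ max (x (f + g)) (x g) := by
    have := xanTriv_nonarch hx (f + g) (-g)
    rw [add_neg_cancel_right, xanTriv_neg hx] at this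
    exact this
  rcases le_max_iff.1 h2 with h3 | h3
  · exact le_antisymm (by rw [max_eq_left h.le] at h1; exact h1) h3
  · exact absurd h3 (not_le.2 h)

lemma xanTriv_sum_le_sup' {x : A → ℝ} (hx : x ∈ XanTriv k A) {ι : Type*} {s : Finset ι}
    (hs : s.Nonempty) (F : ι → A) :
    x (∑ i ∈ s, F i) ≤ s.sup' hs (fun i => x (F i)) := by
  classical
  induction hs using Finset.Nonempty.cons_induction with
  | singleton a => simp
  | cons a s ha hs ih =>
    rw [Finset.sum_cons, Finset.sup'_cons (H := hs)]
    exact le_trans (xanTriv_nonarch hx _ _) (max_le_max le_rfl ih)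

end


open scoped BigOperators Classical

noncomputable section

variable {k A : Type} [Field k] [CommRing A] [Algebra k A]

/-- Append one generator to an affine embedding. -/
def snocE (e : AffEmb k A) (h : A) : AffEmb k A :=
  ⟨e.1 + 1, Fin.snoc (α := fun _ => A) e.2.1 h, by
    have hsub : Set.range e.2.1 ⊆ Set.range (Fin.snoc (α := fun _ => A) e.2.1 h) := by
      rintro _ ⟨i, rfl⟩
      exact ⟨Fin.castSucc i, Fin.snoc_castSucc _ _ _⟩
    exact eq_top_iff.2 (e.2.2.symm.trans_le (Algebra.adjoin_mono hsub))⟩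

@[simp] lemma snocE_last (e : AffEmb k A) (h : A) :
    (snocE e h).2.1 (Fin.last e.1) = h := by
  show Fin.snoc (α := fun _ => A) e.2.1 h (Fin.last e.1) = h
  simp

lemma snocE_castSucc (e : AffEmb k A) (h : A) (j : Fin e.1) :
    (snocE e h).2.1 (Fin.castSucc j) = e.2.1 j := by
  show Fin.snoc (α := fun _ => A) e.2.1 h (Fin.castSucc j) = e.2.1 j
  simp

/-- Concatenate two affine embeddings. -/
def catE (e e' : AffEmb k A) : AffEmb k A :=
  ⟨e.1 + e'.1, Fin.append e.2.1 e'.2.1, by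
    have hsub : Set.range e.2.1 ⊆ Set.range (Fin.append e.2.1 e'.2.1) := by
      rintro _ ⟨i, rfl⟩
      exact ⟨Fin.castAdd e'.1 i, Fin.append_left _ _ _⟩
    exact eq_top_iff.2 (e.2.2.symm.trans_le (Algebra.adjoin_mono hsub))⟩

lemma catE_left (e e' : AffEmb k A) (i : Fin e.1) :
    (catE e e').2.1 (Fin.castAdd e'.1 i) = e.2.1 i := Fin.append_left _ _ _

lemma catE_right (e e' : AffEmb k A) (i : Fin e'.1) :
    (catE e e').2.1 (Fin.natAdd e.1 i) = e'.2.1 i := Fin.append_right _ _ _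

/-- A base embedding, from finite generation. -/
def baseE (hfg : Algebra.FiniteType k A) : AffEmb k A := by
  choose s hs using hfg.out
  exact ⟨s.card, fun i => (s.equivFin.symm i : A), by
    have hr : Set.range (fun i => (s.equivFin.symm i : A)) = ↑s := by
      ext a
      constructor
      · rintro ⟨i, rfl⟩; exact (s.equivFin.symm i).2
      · intro ha; exact ⟨s.equivFin ⟨a, ha⟩, by simp⟩
    rw [hr]; exact hs⟩

/-- An embedding having a prescribed element as its last coordinate. -/
def embOf (hfg : Algebra.FiniteType k A) (f : A) : AffEmb k A := snocE (baseE hfg) f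

lemma embOf_last (hfg : Algebra.FiniteType k A) (f : A) :
    (embOf hfg f).2.1 (Fin.last (baseE hfg).1) = f := snocE_last _ _

lemma aeval_surj (e : AffEmb k A) :
    Function.Surjective (MvPolynomial.aeval (R := k) e.2.1) := by
  rw [← AlgHom.range_eq_top, ← Algebra.adjoin_range_eq_range_aeval]
  exact e.2.2

/-- delta monomial product. -/
lemma prod_pow_delta {m : ℕ} (g : Fin m → A) (j : Fin m) :
    (∏ i, g i ^ (if i = j then 1 else 0)) = g j := by
  rw [Finset.prod_eq_single j (fun i _ hne => by rw [if_neg hne, pow_zero])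
    (fun h => absurd (Finset.mem_univ j) h)]
  rw [if_pos rfl, pow_one]

lemma sum_smul_delta {m : ℕ} (t : Fin m → Rbar) (j : Fin m) :
    (∑ i, (if i = j then 1 else 0) • t i) = t j := by
  rw [Finset.sum_eq_single j (fun i _ hne => by rw [if_neg hne, zero_nsmul])
    (fun h => absurd (Finset.mem_univ j) h)]
  rw [if_pos rfl, one_nsmul]

section limit
variable {y : ∀ e : AffEmb k A, Fin e.1 → Rbar} (hy : y ∈ limitSetTriv k A)

include hy

/-- Coordinate re-indexing compatibility for elements of the limit set. -/
lemma limit_proj (E e : AffEmb k A) (σ : Fin e.1 → Fin E.1)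
    (hσ : ∀ j, e.2.1 j = E.2.1 (σ j)) (j : Fin e.1) : y e j = y E (σ j) := by
  have hrel : ∀ j, e.2.1 j = algebraMap k A ((fun _ => (1:k)) j) *
      ∏ i, E.2.1 i ^ ((fun j i => if i = σ j then 1 else 0) j i) := by
    intro j
    rw [map_one, one_mul, prod_pow_delta, hσ]
  have h := (hy.2 E e _ _ hrel)
  rw [h]
  show nuTriv k 1 + (∑ i, (if i = σ j then 1 else 0) • y E i) = _
  rw [nuTriv_ne_zero (one_ne_zero), sum_smul_delta, zero_add]

/-- Well-definedness: coordinates with equal generator have equal limit values. -/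
lemma limit_consist (e e' : AffEmb k A) (i : Fin e.1) (i' : Fin e'.1)
    (h : e.2.1 i = e'.2.1 i') : y e i = y e' i' := by
  set E := catE e e' with hE
  have h1 : y e i = y E (Fin.castAdd e'.1 i) :=
    limit_proj hy E e _ (fun j => (catE_left e e' j).symm) i
  have h2 : y e' i' = y E (Fin.natAdd e.1 i') :=
    limit_proj hy E e' _ (fun j => (catE_right e e' j).symm) i'
  have h3 : ∀ j, E.2.1 j
      = E.2.1 (Equiv.swap (Fin.castAdd e'.1 i) (Fin.natAdd e.1 i') j) := by
    intro j
    rcases eq_or_ne j (Fin.castAdd e'.1 i) with rfl | hj1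
    · rw [Equiv.swap_apply_left, catE_left, catE_right, h]
    · rcases eq_or_ne j (Fin.natAdd e.1 i') with rfl | hj2
      · rw [Equiv.swap_apply_right, catE_left, catE_right, h]
      · exact congrArg _ (Equiv.swap_apply_of_ne_of_ne hj1 hj2).symm
  have h4 := limit_proj hy E E
    (⇑(Equiv.swap (Fin.castAdd e'.1 i) (Fin.natAdd e.1 i'))) h3 (Fin.castAdd e'.1 i)
  rw [Equiv.swap_apply_left] at h4
  rw [h1, h2, ← h4]

/-- The key monomial relation for elements of the limit set. -/
lemma limit_snoc (e : AffEmb k A) (c : k) (a : Fin e.1 → ℕ) :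
    y (snocE e (algebraMap k A c * ∏ i, e.2.1 i ^ a i)) (Fin.last e.1)
      = nuTriv k c + ∑ i, a i • y e i := by
  set h : A := algebraMap k A c * ∏ i, e.2.1 i ^ a i with hh
  set cf : Fin (e.1 + 1) → k := Fin.snoc (α := fun _ => k) (fun _ => (1:k)) c with hcf
  set af : Fin (e.1 + 1) → Fin e.1 → ℕ :=
    Fin.snoc (α := fun _ => Fin e.1 → ℕ) (fun j i => if i = j then 1 else 0) a with haf
  have hrel : ∀ j, (snocE e h).2.1 j = algebraMap k A (cf j) * ∏ i, e.2.1 i ^ af j i := by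
    intro j
    refine Fin.lastCases ?_ ?_ j
    · rw [snocE_last, hcf, haf]
      simp only [Fin.snoc_last]
      exact hh
    · intro j0
      rw [snocE_castSucc, hcf, haf]
      simp only [Fin.snoc_castSucc]
      rw [map_one, one_mul, prod_pow_delta]
  have hmain := hy.2 e (snocE e h) cf af hrel
  have := congrFun hmain (Fin.last e.1)
  rw [this]
  show nuTriv k (cf (Fin.last e.1)) + (∑ i, af (Fin.last e.1) i • y e i) = _
  rw [hcf, haf]
  simp only [Fin.snoc_last]

end limit

end


open scoped BigOperators Classical

noncomputable section

variable {k A : Type} [Field k] [CommRing A] [Algebra k A]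

lemma aeval_point {m : ℕ} (y : Fin m → k) (P : MvPolynomial (Fin m) k) :
    MvPolynomial.aeval y P = MvPolynomial.eval y P := by
  rw [← MvPolynomial.coe_aeval_eq_eval]
  rfl

lemma aeval_surj' {m : ℕ} {f : Fin m → A} (hgen : Algebra.adjoin k (Set.range f) = ⊤) :
    Function.Surjective (MvPolynomial.aeval (R := k) f) := by
  rw [← AlgHom.range_eq_top, ← Algebra.adjoin_range_eq_range_aeval]
  exact hgen

lemma IsMultSeminorm.prod {p : A → ℝ} (hp : IsMultSeminorm p) {ι : Type*} (s : Finset ι)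
    (F : ι → A) : p (∏ i ∈ s, F i) = ∏ i ∈ s, p (F i) := by
  classical
  induction s using Finset.induction_on with
  | empty => simpa using hp.map_one
  | insert _ _ hni ih =>
    rename_i a s
    rw [Finset.prod_insert hni, Finset.prod_insert hni, hp.map_mul, ih]

/-- Nullstellensatz consequence: an element of `A` vanishing on all `k`-points of the
stratum of `x` has seminorm `0` at `x`. -/
lemma vanish_key [IsAlgClosed k] {x : A → ℝ} (hx : x ∈ XanTriv k A) {m : ℕ}
    {f : Fin m → A} (hgen : Algebra.adjoin k (Set.range f) = ⊤)
    {I0 : Finset (Fin m)} (hI0 : ∀ i, x (f i) ≠ 0 ↔ i ∈ I0) (h : A)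
    (hvan : ∀ φ : A →ₐ[k] k, (∀ i, φ (f i) ≠ 0 ↔ i ∈ I0) → φ h = 0) : x h = 0 := by
  classical
  set π : MvPolynomial (Fin m) k →ₐ[k] A := MvPolynomial.aeval (R := k) f with hπ
  have hsurj : Function.Surjective π := aeval_surj' hgen
  obtain ⟨H, hH⟩ := hsurj h
  set J : Ideal (MvPolynomial (Fin m) k) :=
    RingHom.ker π ⊔ Ideal.span ((fun i => MvPolynomial.X i) '' {i | i ∉ I0}) with hJ
  set P : MvPolynomial (Fin m) k := ∏ i ∈ I0, MvPolynomial.X i with hP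
  -- H * P vanishes on the zero locus of J
  have hmem : H * P ∈ MvPolynomial.vanishingIdeal k (MvPolynomial.zeroLocus k J) := by
    intro y hy
    rw [map_mul]
    by_cases hcase : ∀ i ∈ I0, y i ≠ 0
    · -- build the stratum point
      have hker : ∀ Q ∈ RingHom.ker π, MvPolynomial.aeval (R := k) y Q = 0 := by
        intro Q hQ
        exact hy Q (le_sup_left (α := Ideal (MvPolynomial (Fin m) k)) hQ)
      set φ : A →ₐ[k] k :=
        (Ideal.Quotient.liftₐ (RingHom.ker π) (MvPolynomial.aeval (R := k) y) hker).comp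
          (Ideal.quotientKerAlgEquivOfSurjective hsurj).symm.toAlgHom with hφ
      have hcomp : ∀ Q, φ (π Q) = MvPolynomial.aeval (R := k) y Q := by
        intro Q
        have h1 : (Ideal.quotientKerAlgEquivOfSurjective hsurj).symm (π Q)
            = Ideal.Quotient.mk (RingHom.ker π) Q := by
          apply (Ideal.quotientKerAlgEquivOfSurjective hsurj).injective
          rw [AlgEquiv.apply_symm_apply]
          rfl
        rw [hφ]
        simp only [AlgHom.comp_apply, AlgEquiv.toAlgHom_eq_coe, AlgHom.coe_coe]
        show (Ideal.Quotient.liftₐ _ _ hker) ((Ideal.quotientKerAlgEquivOfSurjective hsurj).symm (π Q)) = _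
        rw [h1, Ideal.Quotient.liftₐ_apply]
        rfl
      have hφf : ∀ i, φ (f i) = y i := by
        intro i
        have : π (MvPolynomial.X i) = f i := MvPolynomial.aeval_X f i
        rw [← this, hcomp, MvPolynomial.aeval_X]
      have hyoff : ∀ i, i ∉ I0 → y i = 0 := by
        intro i hi
        have hXi : (MvPolynomial.X i : MvPolynomial (Fin m) k) ∈ J := by
          refine le_sup_right (α := Ideal (MvPolynomial (Fin m) k)) ?_
          exact Ideal.subset_span ⟨i, hi, rfl⟩
        have := hy _ hXi
        rwa [MvPolynomial.aeval_X] at this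
      have hstrat : ∀ i, φ (f i) ≠ 0 ↔ i ∈ I0 := by
        intro i
        rw [hφf]
        constructor
        · intro hne; by_contra hni; exact hne (hyoff i hni)
        · intro hi; exact hcase i hi
      have h0 := hvan φ hstrat
      rw [← hH, hcomp] at h0
      rw [h0, zero_mul]
    · push_neg at hcase
      obtain ⟨i, hi, hyi⟩ := hcase
      have : MvPolynomial.aeval y P = 0 := by
        rw [hP, map_prod]
        exact Finset.prod_eq_zero hi (by rw [MvPolynomial.aeval_X, hyi])
      rw [this, mul_zero]
  rw [MvPolynomial.vanishingIdeal_zeroLocus_eq_radical] at hmem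
  obtain ⟨s, hs⟩ := (Ideal.mem_radical_iff).1 hmem
  obtain ⟨P1, hP1, P2, hP2, hsum⟩ := Submodule.mem_sup.1 (hJ ▸ hs)
  -- x (π P2) = 0
  have hxP2 : x (π P2) = 0 := by
    refine Submodule.span_induction ?_ ?_ ?_ ?_ hP2
    · rintro _ ⟨i, hi, rfl⟩
      rw [MvPolynomial.aeval_X]
      by_contra hne
      exact hne (by_contra fun h2 => hi ((hI0 i).1 h2))
    · simp [map_zero, hx.1.map_zero]
    · intro a b _ _ ha hb
      refine le_antisymm ?_ (hx.1.nonneg _)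
      calc x (π (a + b)) ≤ x (π a) + x (π b) := by rw [map_add]; exact hx.1.add_le _ _
        _ = 0 := by rw [ha, hb, add_zero]
    · intro r q _ hq
      have : π (r • q) = π r * π q := by rw [smul_eq_mul, map_mul]
      rw [this, hx.1.map_mul, hq, mul_zero]
  have hπsum : π ((H * P) ^ s) = π P2 := by
    rw [← hsum, map_add, RingHom.mem_ker.1 hP1, zero_add]
  have hfP : x ((h * π P) ^ s) = 0 := by
    have : π ((H * P) ^ s) = (h * π P) ^ s := by rw [map_pow, map_mul, hH]
    rw [← this, hπsum, hxP2]
  have hs0 : s ≠ 0 := by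
    rintro rfl
    rw [pow_zero, hx.1.map_one] at hfP
    exact one_ne_zero hfP
  have hxhP : x (h * π P) = 0 := by
    rw [hx.1.pow] at hfP
    exact pow_eq_zero_iff hs0 |>.1 hfP
  have hxP : x (π P) ≠ 0 := by
    rw [hP, map_prod, hx.1.prod]
    refine Finset.prod_ne_zero_iff.2 fun i hi => ?_
    rw [MvPolynomial.aeval_X]
    exact (hI0 i).2 hi
  rw [hx.1.map_mul] at hxhP
  rcases mul_eq_zero.1 hxhP with h0 | h0
  · exact h0
  · exact absurd h0 hxP

end


open scoped BigOperators Classical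

noncomputable section

variable {k A : Type} [Field k] [CommRing A] [Algebra k A]

lemma forward_minTwice [IsAlgClosed k] {x : A → ℝ} (hx : x ∈ XanTriv k A) {m : ℕ}
    {f : Fin m → A} (hgen : Algebra.adjoin k (Set.range f) = ⊤)
    {I0 : Finset (Fin m)} (hI0 : ∀ i, x (f i) ≠ 0 ↔ i ∈ I0)
    {g : Laur k m} (hg : g ∈ stratVanishing k A f I0) (hg0 : g ≠ 0) :
    MinTwiceTriv g (fun i => -Real.log (x (f i))) := by
  classical
  set w : Fin m → ℝ := fun i => -Real.log (x (f i)) with hw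
  set val : (Fin m → ℤ) → ℝ := fun u => ∑ i, (u i : ℝ) * w i with hval
  have hT : g.coeff.support.Nonempty := Finsupp.support_nonempty_iff.2 (by rwa [Ne, AddMonoidAlgebra.coeff_eq_zero])
  obtain ⟨u0, hu0T, hu0min⟩ := Finset.exists_min_image g.coeff.support val hT
  by_cases hsec : ∃ u' ∈ g.coeff.support, u' ≠ u0 ∧ val u' = val u0
  · obtain ⟨u', h1, h2, h3⟩ := hsec
    exact ⟨u0, hu0T, u', h1, Ne.symm h2, h3.symm, fun z hz => hu0min z hz⟩
  exfalso
  push_neg at hsec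
  have hstrict : ∀ u ∈ g.coeff.support, u ≠ u0 → val u0 < val u := fun u hu hne =>
    lt_of_le_of_ne (hu0min u hu) (fun heq => hsec u hu hne heq.symm)
  have hxpos : ∀ i ∈ I0, 0 < x (f i) := fun i hi =>
    lt_of_le_of_ne (hx.1.nonneg _) (Ne.symm ((hI0 i).2 hi))
  have hxw : ∀ i ∈ I0, x (f i) = Real.exp (-(w i)) := by
    intro i hi
    rw [hw]
    simp only [neg_neg]
    rw [Real.exp_log (hxpos i hi)]
  set N : ℕ := g.coeff.support.sup (fun u => Finset.univ.sup (fun i => (u i).natAbs)) with hN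
  have hNle : ∀ u ∈ g.coeff.support, ∀ i, 0 ≤ u i + (N : ℤ) := by
    intro u hu i
    have h1 : (u i).natAbs ≤ Finset.univ.sup (fun i => (u i).natAbs) :=
      Finset.le_sup (f := fun i => (u i).natAbs) (Finset.mem_univ i)
    have h2 : Finset.univ.sup (fun i => (u i).natAbs) ≤ N :=
      Finset.le_sup (f := fun u => Finset.univ.sup fun i => (u i).natAbs) hu
    have h4 : ((u i).natAbs : ℤ) ≤ (N:ℤ) := by exact_mod_cast le_trans h1 h2
    have h5 := neg_abs_le (u i)
    rw [Int.abs_eq_natAbs] at h5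
    linarith
  set E : (Fin m → ℤ) → Fin m → ℕ := fun u i => if i ∈ I0 then (u i + N).toNat else 0 with hE
  set term : (Fin m → ℤ) → A := fun u => algebraMap k A (g.coeff u) * ∏ i, f i ^ E u i with hterm
  set W : ℝ := ∑ i ∈ I0, w i with hW
  have hsupp : ∀ u ∈ g.coeff.support, ∀ i, i ∉ I0 → u i = 0 := hg.1
  have hvalI0 : ∀ u ∈ g.coeff.support, val u = ∑ i ∈ I0, (u i : ℝ) * w i := by
    intro u hu
    rw [hval]
    refine (Finset.sum_subset (Finset.subset_univ I0) ?_).symm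
    intro i _ hi
    rw [hsupp u hu i hi]
    simp
  -- (F1) value of each term
  have hF1 : ∀ u ∈ g.coeff.support, x (term u) = Real.exp (-(val u + N * W)) := by
    intro u hu
    have hgu : x (algebraMap k A (g.coeff u)) = 1 := hx.2 _ (Finsupp.mem_support_iff.1 hu)
    have hpow : ∀ i ∈ I0, x (f i) ^ E u i = Real.exp (-(((u i : ℝ) + N) * w i)) := by
      intro i hi
      rw [hE]
      simp only [if_pos hi]
      rw [hxw i hi, ← Real.exp_nat_mul]
      congr 1
      have hcast : (((u i + (N:ℤ)).toNat : ℝ)) = (u i : ℝ) + N := by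
        have h2 := Int.toNat_of_nonneg (hNle u hu i)
        calc (((u i + (N:ℤ)).toNat : ℕ) : ℝ) = (((u i + (N:ℤ)).toNat : ℤ) : ℝ) := by
              push_cast; ring
          _ = (u i : ℝ) + N := by rw [h2]; push_cast; ring
      rw [hcast]
      ring
    calc x (term u) = 1 * ∏ i, x (f i) ^ E u i := by
          rw [hterm]
          show x (algebraMap k A (g.coeff u) * ∏ i, f i ^ E u i) = _
          rw [hx.1.map_mul, hx.1.prod, hgu]
          congr 1
          exact Finset.prod_congr rfl (fun i _ => hx.1.pow _ _)
      _ = ∏ i ∈ I0, x (f i) ^ E u i := by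
          rw [one_mul]
          refine (Finset.prod_subset (Finset.subset_univ I0) ?_).symm
          intro i _ hi
          rw [hE]
          simp only [if_neg hi, pow_zero]
      _ = ∏ i ∈ I0, Real.exp (-(((u i:ℝ) + N) * w i)) := Finset.prod_congr rfl hpow
      _ = Real.exp (∑ i ∈ I0, -(((u i:ℝ) + N) * w i)) := (Real.exp_sum _ _).symm
      _ = Real.exp (-(val u + N * W)) := by
          rw [hvalI0 u hu, hW]
          congr 1
          rw [Finset.mul_sum, neg_add, ← Finset.sum_neg_distrib, ← Finset.sum_neg_distrib,
            ← Finset.sum_add_distrib]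
          exact Finset.sum_congr rfl (fun i _ => by ring)
  -- (F2) the sum has seminorm zero
  have hstratvan : ∀ φ : A →ₐ[k] k, (∀ i, φ (f i) ≠ 0 ↔ i ∈ I0) →
      φ (∑ u ∈ g.coeff.support, term u) = 0 := by
    intro φ hφ
    set C : k := ∏ i ∈ I0, φ (f i) ^ N with hC
    have hterm' : ∀ u ∈ g.coeff.support, φ (term u) = C * (g.coeff u * ∏ i, (φ (f i)) ^ (u i)) := by
      intro u hu
      rw [hterm]
      show φ (algebraMap k A (g.coeff u) * ∏ i, f i ^ E u i) = _
      rw [map_mul, map_prod]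
      have hgu : φ (algebraMap k A (g.coeff u)) = g.coeff u := by
        rw [φ.commutes]
        exact Algebra.algebraMap_self_apply _
      rw [hgu]
      have h1 : ∏ i, φ (f i ^ E u i) = ∏ i ∈ I0, φ (f i) ^ E u i := by
        rw [← Finset.prod_subset (Finset.subset_univ I0) (fun i _ hi => by
          rw [map_pow, hE]; simp only [if_neg hi, pow_zero])]
        exact Finset.prod_congr rfl (fun i _ => map_pow _ _ _)
      have h2 : ∀ i ∈ I0, φ (f i) ^ E u i = φ (f i) ^ (u i) * φ (f i) ^ N := by
        intro i hi
        have hne : φ (f i) ≠ 0 := (hφ i).2 hi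
        rw [hE]
        simp only [if_pos hi]
        rw [← zpow_natCast (φ (f i)) ((u i + (N:ℤ)).toNat), Int.toNat_of_nonneg (hNle u hu i),
          zpow_add₀ hne, zpow_natCast]
      have h3 : ∏ i ∈ I0, φ (f i) ^ (u i) = ∏ i, φ (f i) ^ (u i) := by
        refine Finset.prod_subset (Finset.subset_univ I0) ?_
        intro i _ hi
        rw [hsupp u hu i hi, zpow_zero]
      rw [h1, Finset.prod_congr rfl h2, Finset.prod_mul_distrib, h3, ← hC]
      ring
    rw [map_sum, Finset.sum_congr rfl hterm', ← Finset.mul_sum]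
    have hvan := hg.2 φ hφ
    have : lEval (fun i => φ (f i)) g = ∑ u ∈ g.coeff.support, g.coeff u * ∏ i, (φ (f i)) ^ (u i) := rfl
    rw [← this, hvan, mul_zero]
  have hxh : x (∑ u ∈ g.coeff.support, term u) = 0 := vanish_key hx hgen hI0 _ hstratvan
  -- (F3) contradiction
  have hterm0pos : 0 < x (term u0) := by
    rw [hF1 u0 hu0T]
    exact Real.exp_pos _
  have hrest : x (∑ u ∈ g.coeff.support.erase u0, term u) < x (term u0) := by
    rcases (g.coeff.support.erase u0).eq_empty_or_nonempty with he | hne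
    · rw [he, Finset.sum_empty, hx.1.map_zero]
      exact hterm0pos
    · refine lt_of_le_of_lt (xanTriv_sum_le_sup' hx hne _) ?_
      rw [Finset.sup'_lt_iff]
      intro u hu
      rw [hF1 u (Finset.mem_of_mem_erase hu), hF1 u0 hu0T]
      apply Real.exp_lt_exp.2
      have := hstrict u (Finset.mem_of_mem_erase hu) (Finset.ne_of_mem_erase hu)
      linarith
  have hsum : term u0 + ∑ u ∈ g.coeff.support.erase u0, term u = ∑ u ∈ g.coeff.support, term u :=
    Finset.add_sum_erase _ _ hu0T
  have heq := xanTriv_add_eq_of_lt hx hrest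
  rw [hsum, hxh] at heq
  exact absurd heq.symm (ne_of_gt hterm0pos)

/-- Forward direction: the tropicalization of a point of `X^an` lies in `Trop(X, ι)`. -/
lemma forward_tropStrat [IsAlgClosed k] {x : A → ℝ} (hx : x ∈ XanTriv k A) {m : ℕ}
    {f : Fin m → A} (hgen : Algebra.adjoin k (Set.range f) = ⊤) :
    (fun i => negLog (x (f i))) ∈ TropStrat k A f := by
  classical
  refine ⟨Finset.univ.filter (fun i => x (f i) ≠ 0), fun i => -Real.log (x (f i)), ?_, ?_⟩
  · funext i
    by_cases hi : x (f i) = 0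
    · rw [negLog, if_pos hi, if_neg (by simp [hi])]
    · rw [negLog, if_neg hi, if_pos (by simp [hi])]
  · intro g hg hg0
    exact forward_minTwice hx hgen (fun i => by simp) hg hg0

end


open scoped BigOperators Classical

noncomputable section

variable {k A : Type} [Field k] [CommRing A] [Algebra k A]

lemma forward_compat {x : A → ℝ} (hx : x ∈ XanTriv k A) {m n : ℕ}
    (f : Fin m → A) (f' : Fin n → A) (c : Fin n → k) (a : Fin n → Fin m → ℕ)
    (hrel : ∀ j, f' j = algebraMap k A (c j) * ∏ i, f i ^ a j i) :
    (fun j => negLog (x (f' j))) = tropMap (nuTriv k) c a (fun i => negLog (x (f i))) := by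
  funext j
  have hval : x (f' j) = expNeg (nuTriv k (c j) + ∑ i, a j i • negLog (x (f i))) := by
    rw [expNeg_add, expNeg_sum]
    rw [hrel j, hx.1.map_mul, xanTriv_algebraMap hx, hx.1.prod]
    congr 1
    refine Finset.prod_congr rfl (fun i _ => ?_)
    rw [hx.1.pow, expNeg_nsmul, expNeg_negLog (hx.1.nonneg _)]
  show negLog (x (f' j)) = _
  rw [hval, negLog_expNeg]
  rfl

/-- Forward direction: the image of `X^an` lies in the limit set. -/
lemma bigMap_mem_limit [IsAlgClosed k] (x : ↥(XanTriv k A)) :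
    bigMapTriv k A x ∈ limitSetTriv k A := by
  constructor
  · intro e
    exact forward_tropStrat x.2 e.2.2
  · intro e e' c a hrel
    exact forward_compat x.2 e.2.1 e'.2.1 c a hrel

/-- The key consequence of the minimum-attained-twice condition, applied to the
"tropical witness" of the additive relation `F i3 = F i1 + F i2`. -/
lemma strat_key {M : ℕ} (F : Fin M → A) (I0 : Finset (Fin M)) (w : Fin M → ℝ)
    (hmin : ∀ g ∈ stratVanishing k A F I0, g ≠ 0 → MinTwiceTriv g w)
    (i1 i2 i3 : Fin M) (h12 : i1 ≠ i2) (h13 : i1 ≠ i3) (h23 : i2 ≠ i3)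
    (hadd : F i3 = F i1 + F i2) (hi3 : i3 ∈ I0) :
    ∃ j, (j = i1 ∨ j = i2) ∧ j ∈ I0 ∧ w j ≤ w i3 := by
  classical
  set δ : Fin M → (Fin M → ℤ) := fun j => Pi.single j (1 : ℤ) with hδdef
  have hδinj : ∀ a b : Fin M, δ a = δ b → a = b := by
    intro a b h
    by_contra hne
    have h1 := congrFun h a
    rw [hδdef] at h1
    simp only [Pi.single_eq_same] at h1
    rw [Pi.single_eq_of_ne hne] at h1
    exact one_ne_zero h1
  have hδ31 : δ i3 ≠ δ i1 := fun h => h13 (hδinj _ _ h).symm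
  have hδ32 : δ i3 ≠ δ i2 := fun h => h23 (hδinj _ _ h).symm
  have hδ12 : δ i1 ≠ δ i2 := fun h => h12 (hδinj _ _ h)
  set c1 : k := if i1 ∈ I0 then (-1 : k) else 0 with hc1
  set c2 : k := if i2 ∈ I0 then (-1 : k) else 0 with hc2
  set P : Laur k M := AddMonoidAlgebra.ofCoeff (Finsupp.single (δ i3) (1 : k) + Finsupp.single (δ i1) c1
    + Finsupp.single (δ i2) c2) with hPdef
  have hP3 : P.coeff (δ i3) = 1 := by
    rw [hPdef]
    rw [AddMonoidAlgebra.coeff_ofCoeff, Finsupp.add_apply, Finsupp.add_apply, Finsupp.single_eq_same,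
      Finsupp.single_eq_of_ne hδ31, Finsupp.single_eq_of_ne hδ32]
    ring
  have hP1 : P.coeff (δ i1) = c1 := by
    rw [hPdef, AddMonoidAlgebra.coeff_ofCoeff, Finsupp.add_apply, Finsupp.add_apply, Finsupp.single_eq_same,
      Finsupp.single_eq_of_ne (Ne.symm hδ31), Finsupp.single_eq_of_ne hδ12]
    ring
  have hP2 : P.coeff (δ i2) = c2 := by
    rw [hPdef, AddMonoidAlgebra.coeff_ofCoeff, Finsupp.add_apply, Finsupp.add_apply, Finsupp.single_eq_same,
      Finsupp.single_eq_of_ne (Ne.symm hδ32), Finsupp.single_eq_of_ne (Ne.symm hδ12)]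
    ring
  have hPsupp : ∀ u ∈ P.coeff.support, u = δ i3 ∨ u = δ i1 ∨ u = δ i2 := by
    intro u hu
    by_contra hno
    push_neg at hno
    obtain ⟨h3, h1, h2⟩ := hno
    have : P.coeff u = 0 := by
      rw [hPdef, AddMonoidAlgebra.coeff_ofCoeff, Finsupp.add_apply, Finsupp.add_apply,
        Finsupp.single_eq_of_ne h3, Finsupp.single_eq_of_ne h1,
        Finsupp.single_eq_of_ne h2]
      ring
    exact Finsupp.mem_support_iff.1 hu this
  have hval : ∀ jj : Fin M, (∑ i, ((δ jj) i : ℝ) * w i) = w jj := by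
    intro jj
    rw [Finset.sum_eq_single jj (fun i _ hne => by
        rw [hδdef]; simp only [Pi.single_eq_of_ne hne]; simp)
      (fun h => absurd (Finset.mem_univ jj) h)]
    rw [hδdef]
    simp
  have hc1mem : c1 ≠ 0 → i1 ∈ I0 := by
    intro h
    by_contra hni
    rw [hc1, if_neg hni] at h
    exact h rfl
  have hc2mem : c2 ≠ 0 → i2 ∈ I0 := by
    intro h
    by_contra hni
    rw [hc2, if_neg hni] at h
    exact h rfl
  -- P lies in the vanishing set of the stratum
  have hmem : P ∈ stratVanishing k A F I0 := by
    constructor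
    · intro u hu i hi
      rcases hPsupp u hu with rfl | rfl | rfl
      · rcases eq_or_ne i i3 with rfl | hne
        · exact absurd hi3 hi
        · rw [hδdef]; exact Pi.single_eq_of_ne hne _
      · rcases eq_or_ne i i1 with rfl | hne
        · have : c1 ≠ 0 := by rw [← hP1]; exact Finsupp.mem_support_iff.1 hu
          exact absurd (hc1mem this) hi
        · rw [hδdef]; exact Pi.single_eq_of_ne hne _
      · rcases eq_or_ne i i2 with rfl | hne
        · have : c2 ≠ 0 := by rw [← hP2]; exact Finsupp.mem_support_iff.1 hu
          exact absurd (hc2mem this) hi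
        · rw [hδdef]; exact Pi.single_eq_of_ne hne _
    · intro φ hφ
      set y : Fin M → k := fun i => φ (F i) with hy
      have hmono : ∀ jj : Fin M, (∏ i, (y i) ^ ((δ jj) i)) = y jj := by
        intro jj
        rw [Finset.prod_eq_single jj (fun i _ hne => by
            rw [hδdef]; simp only [Pi.single_eq_of_ne hne]; exact zpow_zero _)
          (fun h => absurd (Finset.mem_univ jj) h)]
        rw [hδdef]
        simp only [Pi.single_eq_same]
        exact zpow_one _
      have hS : lEval y P = ∑ u ∈ ({δ i3, δ i1, δ i2} : Finset (Fin M → ℤ)),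
          P.coeff u * ∏ i, (y i) ^ (u i) := by
        refine Finset.sum_subset ?_ ?_
        · intro u hu
          rcases hPsupp u hu with rfl | rfl | rfl <;> simp
        · intro u _ hu
          rw [Finsupp.notMem_support_iff.1 hu, zero_mul]
      rw [hS]
      rw [Finset.sum_insert (by simp [hδ31, hδ32]), Finset.sum_insert (by simp [hδ12]),
        Finset.sum_singleton]
      rw [hP3, hP1, hP2, hmono, hmono, hmono]
      have hy3 : y i3 = y i1 + y i2 := by rw [hy]; simp only [hadd, map_add]
      have hy1 : c1 * y i1 = -(y i1) := by
        rcases eq_or_ne (y i1) 0 with h0 | h0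
        · rw [h0]; ring
        · rw [hc1, if_pos ((hφ i1).1 h0)]; ring
      have hy2 : c2 * y i2 = -(y i2) := by
        rcases eq_or_ne (y i2) 0 with h0 | h0
        · rw [h0]; ring
        · rw [hc2, if_pos ((hφ i2).1 h0)]; ring
      rw [hy1, hy2, hy3]
      ring
  have hPne : P ≠ 0 := by
    intro h
    rw [h] at hP3
    simp at hP3
  obtain ⟨u, hu, u', hu', hne, heq, hle⟩ := hmin P hmem hPne
  have hδ3mem : δ i3 ∈ P.coeff.support := Finsupp.mem_support_iff.2 (by rw [hP3]; exact one_ne_zero)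
  have hle3 := hle (δ i3) hδ3mem
  rw [hval] at hle3
  -- u is one of the three deltas
  rcases hPsupp u hu with rfl | rfl | rfl
  · -- u = δ i3 : use u'
    rcases hPsupp u' hu' with rfl | rfl | rfl
    · exact absurd rfl hne
    · refine ⟨i1, Or.inl rfl, hc1mem (by rw [← hP1]; exact Finsupp.mem_support_iff.1 hu'), ?_⟩
      rw [hval, hval] at heq
      rw [← heq]
    · refine ⟨i2, Or.inr rfl, hc2mem (by rw [← hP2]; exact Finsupp.mem_support_iff.1 hu'), ?_⟩
      rw [hval, hval] at heq
      rw [← heq]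
  · refine ⟨i1, Or.inl rfl, hc1mem (by rw [← hP1]; exact Finsupp.mem_support_iff.1 hu), ?_⟩
    rw [hval] at hle3
    exact hle3
  · refine ⟨i2, Or.inr rfl, hc2mem (by rw [← hP2]; exact Finsupp.mem_support_iff.1 hu), ?_⟩
    rw [hval] at hle3
    exact hle3

end


open scoped BigOperators Classical

noncomputable section

variable {k A : Type} [Field k] [CommRing A] [Algebra k A]

/-- The candidate seminorm attached to a point of the limit set. -/
def xvF (hfg : Algebra.FiniteType k A) (y : ∀ e : AffEmb k A, Fin e.1 → Rbar) : A → ℝ :=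
  fun f => expNeg (y (embOf hfg f) (Fin.last (baseE hfg).1))

section construction
variable (hfg : Algebra.FiniteType k A) {y : ∀ e : AffEmb k A, Fin e.1 → Rbar}
  (hy : y ∈ limitSetTriv k A)

include hy

lemma xv_eq (f : A) (e : AffEmb k A) (i : Fin e.1) (h : e.2.1 i = f) :
    xvF hfg y f = expNeg (y e i) :=
  congrArg expNeg (limit_consist hy (embOf hfg f) e _ i (by rw [embOf_last, h]))

lemma xv_snoc (e : AffEmb k A) (c : k) (a : Fin e.1 → ℕ) :
    xvF hfg y (algebraMap k A c * ∏ i, e.2.1 i ^ a i)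
      = expNeg (nuTriv k c + ∑ i, a i • y e i) := by
  rw [xv_eq hfg hy _ (snocE e (algebraMap k A c * ∏ i, e.2.1 i ^ a i)) (Fin.last e.1)
    (snocE_last _ _), limit_snoc hy e c a]

lemma xv_map_one : xvF hfg y 1 = 1 := by
  have h := xv_snoc hfg hy (baseE hfg) 1 (fun _ => 0)
  simp only [map_one, pow_zero, Finset.prod_const_one, mul_one, zero_nsmul,
    Finset.sum_const_zero, add_zero] at h
  rw [h, nuTriv_ne_zero one_ne_zero, expNeg_zero]

lemma xv_map_zero : xvF hfg y 0 = 0 := by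
  have h := xv_snoc hfg hy (baseE hfg) 0 (fun _ => 0)
  simp only [map_zero, pow_zero, Finset.prod_const_one, mul_one, zero_mul, zero_nsmul,
    Finset.sum_const_zero, add_zero] at h
  rw [h, nuTriv_zero, expNeg_top]

lemma xv_scalar (a : k) (ha : a ≠ 0) : xvF hfg y (algebraMap k A a) = 1 := by
  have h := xv_snoc hfg hy (baseE hfg) a (fun _ => 0)
  simp only [pow_zero, Finset.prod_const_one, mul_one, zero_nsmul,
    Finset.sum_const_zero, add_zero] at h
  rw [h, nuTriv_ne_zero ha, expNeg_zero]

lemma xv_map_mul (F G : A) : xvF hfg y (F * G) = xvF hfg y F * xvF hfg y G := by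
  classical
  set E : AffEmb k A := catE (embOf hfg F) (embOf hfg G) with hE
  set iF : Fin E.1 := Fin.castAdd (embOf hfg G).1 (Fin.last (baseE hfg).1) with hiF
  set iG : Fin E.1 := Fin.natAdd (embOf hfg F).1 (Fin.last (baseE hfg).1) with hiG
  have hEF : E.2.1 iF = F := (catE_left _ _ _).trans (embOf_last hfg F)
  have hEG : E.2.1 iG = G := (catE_right _ _ _).trans (embOf_last hfg G)
  set a : Fin E.1 → ℕ := fun i => (if i = iF then 1 else 0) + (if i = iG then 1 else 0) with ha
  have hprod : algebraMap k A (1:k) * ∏ i, E.2.1 i ^ a i = F * G := by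
    rw [map_one, one_mul, ha]
    simp only [pow_add]
    rw [Finset.prod_mul_distrib, prod_pow_delta, prod_pow_delta, hEF, hEG]
  have h := xv_snoc hfg hy E 1 a
  rw [hprod] at h
  have hsum : (∑ i, a i • y E i) = y E iF + y E iG := by
    rw [ha]
    simp only [add_nsmul]
    rw [Finset.sum_add_distrib, sum_smul_delta, sum_smul_delta]
  rw [h, hsum, nuTriv_ne_zero one_ne_zero, zero_add, expNeg_add,
    ← xv_eq hfg hy F E iF hEF, ← xv_eq hfg hy G E iG hEG]

lemma xv_add_le (F G : A) : xvF hfg y (F + G) ≤ xvF hfg y F + xvF hfg y G := by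
  classical
  set E0 : AffEmb k A := catE (embOf hfg F) (embOf hfg G) with hE0
  set E : AffEmb k A := snocE E0 (F + G) with hEd
  set i1 : Fin E.1 :=
    Fin.castSucc (Fin.castAdd (embOf hfg G).1 (Fin.last (baseE hfg).1)) with hi1
  set i2 : Fin E.1 :=
    Fin.castSucc (Fin.natAdd (embOf hfg F).1 (Fin.last (baseE hfg).1)) with hi2
  set i3 : Fin E.1 := Fin.last E0.1 with hi3
  have hE1 : E.2.1 i1 = F :=
    (snocE_castSucc E0 (F + G) _).trans ((catE_left _ _ _).trans (embOf_last hfg F))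
  have hE2 : E.2.1 i2 = G :=
    (snocE_castSucc E0 (F + G) _).trans ((catE_right _ _ _).trans (embOf_last hfg G))
  have hE3 : E.2.1 i3 = F + G := snocE_last _ _
  have h12 : i1 ≠ i2 := by
    intro h
    have hv := congrArg Fin.val h
    rw [hi1, hi2] at hv
    have hv' : (baseE hfg).1 = (embOf hfg F).1 + (baseE hfg).1 := hv
    have hlt : (baseE hfg).1 < (embOf hfg F).1 := by
      show (baseE hfg).1 < (baseE hfg).1 + 1
      omega
    omega
  have h13 : i1 ≠ i3 := ne_of_lt (Fin.castSucc_lt_last _)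
  have h23 : i2 ≠ i3 := ne_of_lt (Fin.castSucc_lt_last _)
  obtain ⟨I0, w, hvform, hminw⟩ := hy.1 E
  have hyE : ∀ i, y E i = if i ∈ I0 then ((w i : ℝ) : Rbar) else ⊤ :=
    fun i => congrFun hvform i
  have hx3 : xvF hfg y (F + G) = expNeg (y E i3) := xv_eq hfg hy _ E i3 hE3
  by_cases h3 : i3 ∈ I0
  · obtain ⟨j, hj12, hjI0, hjle⟩ := strat_key E.2.1 I0 w hminw i1 i2 i3 h12 h13 h23
      (by rw [hE3, hE1, hE2]) h3
    have hle : expNeg (y E i3) ≤ expNeg (y E j) := by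
      rw [hyE i3, if_pos h3, hyE j, if_pos hjI0, expNeg_coe, expNeg_coe]
      exact Real.exp_le_exp.2 (by linarith)
    rcases hj12 with hj | hj
    · calc xvF hfg y (F + G) = expNeg (y E i3) := hx3
        _ ≤ expNeg (y E j) := hle
        _ = xvF hfg y F := (xv_eq hfg hy F E j (by rw [hj, hE1])).symm
        _ ≤ xvF hfg y F + xvF hfg y G := le_add_of_nonneg_right (expNeg_nonneg _)
    · calc xvF hfg y (F + G) = expNeg (y E i3) := hx3
        _ ≤ expNeg (y E j) := hle
        _ = xvF hfg y G := (xv_eq hfg hy G E j (by rw [hj, hE2])).symm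
        _ ≤ xvF hfg y F + xvF hfg y G := le_add_of_nonneg_left (expNeg_nonneg _)
  · rw [hx3, hyE i3, if_neg h3, expNeg_top]
    exact add_nonneg (expNeg_nonneg _) (expNeg_nonneg _)

lemma xv_mem : xvF hfg y ∈ XanTriv k A := by
  refine ⟨⟨fun f => expNeg_nonneg _, xv_map_zero hfg hy, xv_map_one hfg hy,
    xv_map_mul hfg hy, xv_add_le hfg hy⟩, fun a ha => xv_scalar hfg hy a ha⟩

lemma bigMap_xv : bigMapTriv k A ⟨xvF hfg y, xv_mem hfg hy⟩ = y := by
  funext e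
  funext i
  show negLog (xvF hfg y (e.2.1 i)) = y e i
  rw [xv_eq hfg hy (e.2.1 i) e i rfl, negLog_expNeg]

end construction

end


open scoped BigOperators Classical

noncomputable section

variable {k A : Type} [Field k] [CommRing A] [Algebra k A]

lemma bigMap_continuous : Continuous (bigMapTriv k A) := by
  refine continuous_pi (fun e => continuous_pi (fun i => ?_))
  refine continuous_induced_rng.2 ?_
  have heq : (fun x : ↥(XanTriv k A) => expNeg (negLog (x.1 (e.2.1 i))))
      = fun x : ↥(XanTriv k A) => x.1 (e.2.1 i) := by
    funext x
    exact expNeg_negLog (x.2.1.nonneg _)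
  show Continuous (fun x : ↥(XanTriv k A) => expNeg (negLog (x.1 (e.2.1 i))))
  rw [heq]
  exact (continuous_apply _).comp continuous_subtype_val

/-- Reconstruction map. -/
def recon (hfg : Algebra.FiniteType k A) (z : ∀ e : AffEmb k A, Fin e.1 → Rbar) : A → ℝ :=
  fun f => expNeg (z (embOf hfg f) (Fin.last (baseE hfg).1))

lemma recon_continuous (hfg : Algebra.FiniteType k A) : Continuous (recon (k := k) (A := A) hfg) := by
  refine continuous_pi (fun f => ?_)
  exact continuous_induced_dom.comp ((continuous_apply _).comp (continuous_apply _))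

lemma recon_bigMap (hfg : Algebra.FiniteType k A) :
    recon (k := k) (A := A) hfg ∘ bigMapTriv k A = Subtype.val := by
  funext x
  funext f
  show expNeg (negLog (x.1 ((embOf hfg f).2.1 (Fin.last (baseE hfg).1)))) = x.1 f
  rw [embOf_last, expNeg_negLog (x.2.1.nonneg _)]

lemma bigMap_inducing (hfg : Algebra.FiniteType k A) :
    Topology.IsInducing (bigMapTriv k A) := by
  refine Topology.IsInducing.of_comp bigMap_continuous (recon_continuous hfg) ?_
  rw [recon_bigMap hfg]
  exact Topology.IsInducing.subtypeVal

lemma bigMap_injective (hfg : Algebra.FiniteType k A) :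
    Function.Injective (bigMapTriv k A) := by
  intro x1 x2 h
  have := congrArg (recon (k := k) (A := A) hfg) h
  have h1 := congrFun (recon_bigMap hfg) x1
  have h2 := congrFun (recon_bigMap hfg) x2
  exact Subtype.ext ((h1.symm.trans this).trans h2)

end

/-- Theorem 5.1, affine case, trivial valuation.  Over an
algebraically closed trivially valued field `k`, for an affine variety `X = Spec A`, the
map `varprojlim π_ι` is a homeomorphism from `X^an` onto `varprojlim Trop(X, ι)`: the map
`x ↦ (π_ι(x))_ι` is a topological embedding whose image is exactly the set of families
`(y_ι)` with `y_ι ∈ Trop(X, ι)` (the stratified extended tropicalization, defined via the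
trivial-valuation initial-form criterion) for every affine embedding `ι`, compatible with
the transition maps `Trop(φ)` for all equivariant morphisms `φ` commuting with the
embeddings. -/
theorem stmt11 {k A : Type} [Field k] [IsAlgClosed k] [CommRing A] [IsDomain A]
    [Algebra k A] (hfg : Algebra.FiniteType k A) :
    Topology.IsEmbedding (bigMapTriv k A) ∧
      Set.range (bigMapTriv k A) = limitSetTriv k A := by
  constructor
  · exact ⟨bigMap_inducing hfg, bigMap_injective hfg⟩
  · refine Set.Subset.antisymm ?_ ?_
    · rintro _ ⟨x, rfl⟩
      exact bigMap_mem_limit x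
    · intro y hy
      exact ⟨⟨xvF hfg y, xv_mem hfg hy⟩, bigMap_xv hfg hy⟩

end
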